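/- Let G be the m×n rectangle grid graph with corners P = (1,1), Q = (n,1), R = (n,m), S = (1,m), and let G' be G with an extra edge e between E = (x_E, y_E) and F = (x_F, y_F) with d_G(E,F) ≥ 2, where x_F ≤ x_E, y_E ≤ y_F, and x_E − x_F ≤ y_F − y_E. If A lies in the special region R_Q and B lies in the special region R_S, then d_{G'}(A,Q) ≠ d_{G'}(B,Q) or d_{G'}(A,S) ≠ d_{G'}(B,S); similarly, if A ∈ R_P and B ∈ R_R, then A and B are distinguished by P or by R. -/

import Mathlib

/-- A set `R` of vertices resolves the graph `H` if every pair of distinct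
vertices is distinguished by some vertex of `R`. -/
def resolves {V : Type*} (H : SimpleGraph V) (R : Set V) : Prop :=
  ∀ a b : V, a ≠ b → ∃ x ∈ R, H.dist a x ≠ H.dist b x

/-- The metric dimension: the least cardinality of a (finite) resolving set. -/
noncomputable def metricDim {V : Type*} (H : SimpleGraph V) : ℕ :=
  sInf {k | ∃ R : Finset V, R.card = k ∧ resolves H (R : Set V)}

/-- The rectangle grid graph with `n` columns and `m` rows: the vertex `(i, j)`
(with `i : Fin n`, `j : Fin m`) represents the grid point in column `i + 1` and row
`j + 1`; two vertices are adjacent when they differ by exactly 1 in exactly one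
coordinate, i.e. when their ℓ¹ distance is 1. -/
def grid2 (n m : ℕ) : SimpleGraph (Fin n × Fin m) where
  Adj a b := |((a.1 : ℕ) : ℤ) - ((b.1 : ℕ) : ℤ)| + |((a.2 : ℕ) : ℤ) - ((b.2 : ℕ) : ℤ)| = 1
  symm := by
    constructor
    intro a b h
    rw [abs_sub_comm ((b.1 : ℕ) : ℤ), abs_sub_comm ((b.2 : ℕ) : ℤ)]
    exact h
  loopless := by constructor; intro a h; simp at h

/-- The special region of `A`: vertices whose distance to `A` decreased from `G` to `G'`. -/
def specialRegion {V : Type*} (G G' : SimpleGraph V) (A : V) : Set V :=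
  {Z | G'.dist Z A < G.dist Z A}

lemma natAbs_c0 (x : ℕ) : ((x : ℤ) - ((0 : ℕ) : ℤ)).natAbs = x := by omega

lemma natAbs_cn (x n : ℕ) (h : x < n) :
    ((x : ℤ) - ((n - 1 : ℕ) : ℤ)).natAbs = n - 1 - x := by omega

set_option maxHeartbeats 1000000 in
lemma key_QS (n m xa ya xb yb xe ye xf yf dA1 dA2 dB1 dB2 : ℕ)
    (hlA1 : (n - 1 - xa) + ya ≤ dA1 ∨ ((xa : ℤ) - (xe : ℤ)).natAbs + ((ya : ℤ) - (ye : ℤ)).natAbs + 1 + ((n - 1 - xf) + yf) ≤ dA1 ∨ ((xa : ℤ) - (xf : ℤ)).natAbs + ((ya : ℤ) - (yf : ℤ)).natAbs + 1 + ((n - 1 - xe) + ye) ≤ dA1)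
    (hu1A1 : dA1 ≤ (n - 1 - xa) + ya)
    (hu2A1 : dA1 ≤ ((xa : ℤ) - (xe : ℤ)).natAbs + ((ya : ℤ) - (ye : ℤ)).natAbs + 1 + ((n - 1 - xf) + yf))
    (hu3A1 : dA1 ≤ ((xa : ℤ) - (xf : ℤ)).natAbs + ((ya : ℤ) - (yf : ℤ)).natAbs + 1 + ((n - 1 - xe) + ye))
    (hlA2 : xa + (m - 1 - ya) ≤ dA2 ∨ ((xa : ℤ) - (xe : ℤ)).natAbs + ((ya : ℤ) - (ye : ℤ)).natAbs + 1 + (xf + (m - 1 - yf)) ≤ dA2 ∨ ((xa : ℤ) - (xf : ℤ)).natAbs + ((ya : ℤ) - (yf : ℤ)).natAbs + 1 + (xe + (m - 1 - ye)) ≤ dA2)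
    (hu1A2 : dA2 ≤ xa + (m - 1 - ya))
    (hu2A2 : dA2 ≤ ((xa : ℤ) - (xe : ℤ)).natAbs + ((ya : ℤ) - (ye : ℤ)).natAbs + 1 + (xf + (m - 1 - yf)))
    (hu3A2 : dA2 ≤ ((xa : ℤ) - (xf : ℤ)).natAbs + ((ya : ℤ) - (yf : ℤ)).natAbs + 1 + (xe + (m - 1 - ye)))
    (hlB1 : (n - 1 - xb) + yb ≤ dB1 ∨ ((xb : ℤ) - (xe : ℤ)).natAbs + ((yb : ℤ) - (ye : ℤ)).natAbs + 1 + ((n - 1 - xf) + yf) ≤ dB1 ∨ ((xb : ℤ) - (xf : ℤ)).natAbs + ((yb : ℤ) - (yf : ℤ)).natAbs + 1 + ((n - 1 - xe) + ye) ≤ dB1)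
    (hu1B1 : dB1 ≤ (n - 1 - xb) + yb)
    (hu2B1 : dB1 ≤ ((xb : ℤ) - (xe : ℤ)).natAbs + ((yb : ℤ) - (ye : ℤ)).natAbs + 1 + ((n - 1 - xf) + yf))
    (hu3B1 : dB1 ≤ ((xb : ℤ) - (xf : ℤ)).natAbs + ((yb : ℤ) - (yf : ℤ)).natAbs + 1 + ((n - 1 - xe) + ye))
    (hlB2 : xb + (m - 1 - yb) ≤ dB2 ∨ ((xb : ℤ) - (xe : ℤ)).natAbs + ((yb : ℤ) - (ye : ℤ)).natAbs + 1 + (xf + (m - 1 - yf)) ≤ dB2 ∨ ((xb : ℤ) - (xf : ℤ)).natAbs + ((yb : ℤ) - (yf : ℤ)).natAbs + 1 + (xe + (m - 1 - ye)) ≤ dB2)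
    (hu1B2 : dB2 ≤ xb + (m - 1 - yb))
    (hu2B2 : dB2 ≤ ((xb : ℤ) - (xe : ℤ)).natAbs + ((yb : ℤ) - (ye : ℤ)).natAbs + 1 + (xf + (m - 1 - yf)))
    (hu3B2 : dB2 ≤ ((xb : ℤ) - (xf : ℤ)).natAbs + ((yb : ℤ) - (yf : ℤ)).natAbs + 1 + (xe + (m - 1 - ye)))
    (hA : dA1 < (n - 1 - xa) + ya)
    (hB : dB2 < xb + (m - 1 - yb))
    (hc1 : dA1 = dB1)
    (hc2 : dA2 = dB2)
    (hk : 2 ≤ ((xe : ℤ) - (xf : ℤ)).natAbs + ((ye : ℤ) - (yf : ℤ)).natAbs)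
    (h1 : xf ≤ xe)
    (h2 : ye ≤ yf)
    (h3 : xe - xf ≤ yf - ye)
    (hbxa : xa < n)
    (hbya : ya < m)
    (hbxb : xb < n)
    (hbyb : yb < m)
    (hbxe : xe < n)
    (hbye : ye < m)
    (hbxf : xf < n)
    (hbyf : yf < m) : False := by
  have e1 : dA1 = ((xa : ℤ) - (xf : ℤ)).natAbs + ((ya : ℤ) - (yf : ℤ)).natAbs + 1 + ((n - 1 - xe) + ye) := by
    clear hlA2 hlB1 hlB2 hc1 hc2 hu2A2 hu3A2 hu2B1 hu3B1 hu2B2 hu3B2 hB hu1A2 hu1B1 hu1B2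
    rcases hlA1 with h | h | h <;> omega
  have e2 : dB2 = ((xb : ℤ) - (xe : ℤ)).natAbs + ((yb : ℤ) - (ye : ℤ)).natAbs + 1 + (xf + (m - 1 - yf)) := by
    clear hlA1 hlA2 hlB1 hc1 hc2 hu2A1 hu3A1 hu2A2 hu3A2 hu2B1 hu3B1 hA e1 hu1A1 hu1A2 hu1B1
    rcases hlB2 with h | h | h <;> omega
  have e3 : dA2 = xa + (m - 1 - ya) := by
    clear hlA1 hlB1 hlB2 hc1 hc2 hu2A1 hu3A1 hu2B1 hu3B1 hu2B2 hu3B2 hB e2 hu1A1 hu1B1 hu1B2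
    rcases hlA2 with h | h | h <;> omega
  have e4 : dB1 = (n - 1 - xb) + yb := by
    clear hlA1 hlA2 hlB2 hc1 hc2 hu2A1 hu3A1 hu2A2 hu3A2 hu2B2 hu3B2 hA e1 e3 hu1A1 hu1A2 hu1B2
    rcases hlB1 with h | h | h <;> omega
  clear hlA1 hlA2 hlB1 hlB2 hu2A1 hu3A1 hu2A2 hu3A2 hu2B1 hu3B1 hu2B2 hu3B2 hu1A1 hu1A2 hu1B1 hu1B2
  omega

set_option maxHeartbeats 1000000 in
lemma key_PR (n m xa ya xb yb xe ye xf yf dA1 dA2 dB1 dB2 : ℕ)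
    (hlA1 : xa + ya ≤ dA1 ∨ ((xa : ℤ) - (xe : ℤ)).natAbs + ((ya : ℤ) - (ye : ℤ)).natAbs + 1 + (xf + yf) ≤ dA1 ∨ ((xa : ℤ) - (xf : ℤ)).natAbs + ((ya : ℤ) - (yf : ℤ)).natAbs + 1 + (xe + ye) ≤ dA1)
    (hu1A1 : dA1 ≤ xa + ya)
    (hu2A1 : dA1 ≤ ((xa : ℤ) - (xe : ℤ)).natAbs + ((ya : ℤ) - (ye : ℤ)).natAbs + 1 + (xf + yf))
    (hu3A1 : dA1 ≤ ((xa : ℤ) - (xf : ℤ)).natAbs + ((ya : ℤ) - (yf : ℤ)).natAbs + 1 + (xe + ye))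
    (hlA2 : (n - 1 - xa) + (m - 1 - ya) ≤ dA2 ∨ ((xa : ℤ) - (xe : ℤ)).natAbs + ((ya : ℤ) - (ye : ℤ)).natAbs + 1 + ((n - 1 - xf) + (m - 1 - yf)) ≤ dA2 ∨ ((xa : ℤ) - (xf : ℤ)).natAbs + ((ya : ℤ) - (yf : ℤ)).natAbs + 1 + ((n - 1 - xe) + (m - 1 - ye)) ≤ dA2)
    (hu1A2 : dA2 ≤ (n - 1 - xa) + (m - 1 - ya))
    (hu2A2 : dA2 ≤ ((xa : ℤ) - (xe : ℤ)).natAbs + ((ya : ℤ) - (ye : ℤ)).natAbs + 1 + ((n - 1 - xf) + (m - 1 - yf)))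
    (hu3A2 : dA2 ≤ ((xa : ℤ) - (xf : ℤ)).natAbs + ((ya : ℤ) - (yf : ℤ)).natAbs + 1 + ((n - 1 - xe) + (m - 1 - ye)))
    (hlB1 : xb + yb ≤ dB1 ∨ ((xb : ℤ) - (xe : ℤ)).natAbs + ((yb : ℤ) - (ye : ℤ)).natAbs + 1 + (xf + yf) ≤ dB1 ∨ ((xb : ℤ) - (xf : ℤ)).natAbs + ((yb : ℤ) - (yf : ℤ)).natAbs + 1 + (xe + ye) ≤ dB1)
    (hu1B1 : dB1 ≤ xb + yb)
    (hu2B1 : dB1 ≤ ((xb : ℤ) - (xe : ℤ)).natAbs + ((yb : ℤ) - (ye : ℤ)).natAbs + 1 + (xf + yf))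
    (hu3B1 : dB1 ≤ ((xb : ℤ) - (xf : ℤ)).natAbs + ((yb : ℤ) - (yf : ℤ)).natAbs + 1 + (xe + ye))
    (hlB2 : (n - 1 - xb) + (m - 1 - yb) ≤ dB2 ∨ ((xb : ℤ) - (xe : ℤ)).natAbs + ((yb : ℤ) - (ye : ℤ)).natAbs + 1 + ((n - 1 - xf) + (m - 1 - yf)) ≤ dB2 ∨ ((xb : ℤ) - (xf : ℤ)).natAbs + ((yb : ℤ) - (yf : ℤ)).natAbs + 1 + ((n - 1 - xe) + (m - 1 - ye)) ≤ dB2)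
    (hu1B2 : dB2 ≤ (n - 1 - xb) + (m - 1 - yb))
    (hu2B2 : dB2 ≤ ((xb : ℤ) - (xe : ℤ)).natAbs + ((yb : ℤ) - (ye : ℤ)).natAbs + 1 + ((n - 1 - xf) + (m - 1 - yf)))
    (hu3B2 : dB2 ≤ ((xb : ℤ) - (xf : ℤ)).natAbs + ((yb : ℤ) - (yf : ℤ)).natAbs + 1 + ((n - 1 - xe) + (m - 1 - ye)))
    (hA : dA1 < xa + ya)
    (hB : dB2 < (n - 1 - xb) + (m - 1 - yb))
    (hc1 : dA1 = dB1)
    (hc2 : dA2 = dB2)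
    (hk : 2 ≤ ((xe : ℤ) - (xf : ℤ)).natAbs + ((ye : ℤ) - (yf : ℤ)).natAbs)
    (h1 : xf ≤ xe)
    (h2 : ye ≤ yf)
    (h3 : xe - xf ≤ yf - ye)
    (hbxa : xa < n)
    (hbya : ya < m)
    (hbxb : xb < n)
    (hbyb : yb < m)
    (hbxe : xe < n)
    (hbye : ye < m)
    (hbxf : xf < n)
    (hbyf : yf < m) : False := by
  have e1 : dA1 = ((xa : ℤ) - (xf : ℤ)).natAbs + ((ya : ℤ) - (yf : ℤ)).natAbs + 1 + (xe + ye) := by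
    clear hlA2 hlB1 hlB2 hc1 hc2 hu2A2 hu3A2 hu2B1 hu3B1 hu2B2 hu3B2 hB hu1A2 hu1B1 hu1B2
    rcases hlA1 with h | h | h <;> omega
  have e2 : dB2 = ((xb : ℤ) - (xe : ℤ)).natAbs + ((yb : ℤ) - (ye : ℤ)).natAbs + 1 + ((n - 1 - xf) + (m - 1 - yf)) := by
    clear hlA1 hlA2 hlB1 hc1 hc2 hu2A1 hu3A1 hu2A2 hu3A2 hu2B1 hu3B1 hA e1 hu1A1 hu1A2 hu1B1
    rcases hlB2 with h | h | h <;> omega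
  have e3 : dA2 = (n - 1 - xa) + (m - 1 - ya) := by
    clear hlA1 hlB1 hlB2 hc1 hc2 hu2A1 hu3A1 hu2B1 hu3B1 hu2B2 hu3B2 hB e2 hu1A1 hu1B1 hu1B2
    rcases hlA2 with h | h | h <;> omega
  have e4 : dB1 = xb + yb := by
    clear hlA1 hlA2 hlB2 hc1 hc2 hu2A1 hu3A1 hu2A2 hu3A2 hu2B2 hu3B2 hA e1 e3 hu1A1 hu1A2 hu1B2
    rcases hlB1 with h | h | h <;> omega
  clear hlA1 hlA2 hlB1 hlB2 hu2A1 hu3A1 hu2A2 hu3A2 hu2B1 hu3B1 hu2B2 hu3B2 hu1A1 hu1A2 hu1B1 hu1B2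
  omega

/-- ℓ¹ distance as a natural number. -/
def l1 {n m : ℕ} (a b : Fin n × Fin m) : ℕ :=
  (((a.1 : ℕ) : ℤ) - ((b.1 : ℕ) : ℤ)).natAbs + (((a.2 : ℕ) : ℤ) - ((b.2 : ℕ) : ℤ)).natAbs

lemma grid2_adj_iff {n m : ℕ} (a b : Fin n × Fin m) :
    (grid2 n m).Adj a b ↔ l1 a b = 1 := by
  show |_| + |_| = 1 ↔ _
  rw [Int.abs_eq_natAbs, Int.abs_eq_natAbs]
  unfold l1
  omega

lemma grid2_walk_le {n m : ℕ} {a b : Fin n × Fin m} (w : (grid2 n m).Walk a b) :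
    l1 a b ≤ w.length := by
  induction w with
  | nil => simp [l1]
  | cons h w ih =>
    rw [grid2_adj_iff] at h
    rw [SimpleGraph.Walk.length_cons]
    unfold l1 at *
    omega

lemma grid2_walk_exists {n m : ℕ} : ∀ (k : ℕ) (a b : Fin n × Fin m), l1 a b = k →
    ∃ w : (grid2 n m).Walk a b, w.length = k := by
  intro k
  induction k with
  | zero =>
    intro a b h
    unfold l1 at h
    have : a = b := by
      have h1 : (a.1 : ℕ) = (b.1 : ℕ) := by omega
      have h2 : (a.2 : ℕ) = (b.2 : ℕ) := by omega
      exact Prod.ext (Fin.ext h1) (Fin.ext h2)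
    subst this
    exact ⟨SimpleGraph.Walk.nil, rfl⟩
  | succ k ih =>
    intro a b h
    unfold l1 at h
    rcases lt_trichotomy (a.1 : ℕ) (b.1 : ℕ) with h1 | h1 | h1
    · set a' : Fin n × Fin m := (⟨(a.1 : ℕ) + 1, by omega⟩, a.2) with ha'
      have hadj : (grid2 n m).Adj a a' := by rw [grid2_adj_iff]; unfold l1; simp [ha']; try omega
      obtain ⟨w, hw⟩ := ih a' b (by unfold l1; simp [ha']; try omega)
      exact ⟨SimpleGraph.Walk.cons hadj w, by simp [hw]⟩
    · -- second coordinate differs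
      rcases lt_trichotomy (a.2 : ℕ) (b.2 : ℕ) with h2 | h2 | h2
      · set a' : Fin n × Fin m := (a.1, ⟨(a.2 : ℕ) + 1, by omega⟩) with ha'
        have hadj : (grid2 n m).Adj a a' := by rw [grid2_adj_iff]; unfold l1; simp [ha']; try omega
        obtain ⟨w, hw⟩ := ih a' b (by unfold l1; simp [ha']; try omega)
        exact ⟨SimpleGraph.Walk.cons hadj w, by simp [hw]⟩
      · omega
      · set a' : Fin n × Fin m := (a.1, ⟨(a.2 : ℕ) - 1, by omega⟩) with ha'
        have hadj : (grid2 n m).Adj a a' := by rw [grid2_adj_iff]; unfold l1; simp [ha']; try omega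
        obtain ⟨w, hw⟩ := ih a' b (by unfold l1; simp [ha']; try omega)
        exact ⟨SimpleGraph.Walk.cons hadj w, by simp [hw]⟩
    · set a' : Fin n × Fin m := (⟨(a.1 : ℕ) - 1, by omega⟩, a.2) with ha'
      have hadj : (grid2 n m).Adj a a' := by rw [grid2_adj_iff]; unfold l1; simp [ha']; try omega
      obtain ⟨w, hw⟩ := ih a' b (by unfold l1; simp [ha']; try omega)
      exact ⟨SimpleGraph.Walk.cons hadj w, by simp [hw]⟩

lemma grid2_reachable {n m : ℕ} (a b : Fin n × Fin m) : (grid2 n m).Reachable a b :=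
  ⟨(grid2_walk_exists (l1 a b) a b rfl).choose⟩

lemma grid2_connected {n m : ℕ} (hn : 0 < n) (hm : 0 < m) : (grid2 n m).Connected := by
  have : Nonempty (Fin n × Fin m) := ⟨(⟨0, hn⟩, ⟨0, hm⟩)⟩
  exact ⟨fun a b => grid2_reachable a b⟩

lemma grid2_dist {n m : ℕ} (a b : Fin n × Fin m) : (grid2 n m).dist a b = l1 a b := by
  obtain ⟨w, hw⟩ := grid2_walk_exists (l1 a b) a b rfl
  refine le_antisymm (hw ▸ SimpleGraph.dist_le w) ?_
  obtain ⟨p, hp⟩ := (grid2_reachable a b).exists_walk_length_eq_dist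
  exact hp ▸ grid2_walk_le p
section
variable {n m : ℕ} {E F : Fin n × Fin m} {G' : SimpleGraph (Fin n × Fin m)}

lemma Gp_adj_iff (hG' : G' = grid2 n m ⊔ SimpleGraph.fromEdgeSet {s(E, F)})
    (hne : E ≠ F) (a b : Fin n × Fin m) :
    G'.Adj a b ↔ (grid2 n m).Adj a b ∨ (a = E ∧ b = F) ∨ (a = F ∧ b = E) := by
  subst hG'
  simp only [SimpleGraph.sup_adj, SimpleGraph.fromEdgeSet_adj, Set.mem_singleton_iff,
    Sym2.eq_iff]
  constructor
  · rintro (h | ⟨(⟨rfl, rfl⟩ | ⟨rfl, rfl⟩), h2⟩)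
    · exact Or.inl h
    · exact Or.inr (Or.inl ⟨rfl, rfl⟩)
    · exact Or.inr (Or.inr ⟨rfl, rfl⟩)
  · rintro (h | ⟨rfl, rfl⟩ | ⟨rfl, rfl⟩)
    · exact Or.inl h
    · exact Or.inr ⟨Or.inl ⟨rfl, rfl⟩, hne⟩
    · exact Or.inr ⟨Or.inr ⟨rfl, rfl⟩, fun h => hne h.symm⟩

lemma Gp_lower_aux (hG' : G' = grid2 n m ⊔ SimpleGraph.fromEdgeSet {s(E, F)})
    (hne : E ≠ F) : ∀ {a b : Fin n × Fin m} (w : G'.Walk a b),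
    l1 a b ≤ w.length ∨ l1 a E + 1 + l1 F b ≤ w.length ∨ l1 a F + 1 + l1 E b ≤ w.length := by
  intro a b w
  induction w with
  | nil => left; simp [l1]
  | @cons a c b h w ih =>
    rw [SimpleGraph.Walk.length_cons]
    rw [Gp_adj_iff hG' hne] at h
    rcases h with h | ⟨rfl, rfl⟩ | ⟨rfl, rfl⟩
    · rw [grid2_adj_iff] at h
      unfold l1 at *
      rcases ih with h' | h' | h' <;>
        first
          | (left; omega)
          | (right; left; omega)
          | (right; right; omega)
    · unfold l1 at *
      rcases ih with h' | h' | h' <;>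
        first
          | (left; omega)
          | (right; left; omega)
          | (right; right; omega)
    · unfold l1 at *
      rcases ih with h' | h' | h' <;>
        first
          | (left; omega)
          | (right; left; omega)
          | (right; right; omega)

lemma Gp_lower (hG' : G' = grid2 n m ⊔ SimpleGraph.fromEdgeSet {s(E, F)})
    (hne : E ≠ F) (a b : Fin n × Fin m) :
    l1 a b ≤ G'.dist a b ∨ l1 a E + 1 + l1 F b ≤ G'.dist a b ∨
      l1 a F + 1 + l1 E b ≤ G'.dist a b := by
  subst hG'
  have hr := (grid2_reachable a b).mono (le_sup_left :
    grid2 n m ≤ grid2 n m ⊔ SimpleGraph.fromEdgeSet {s(E, F)})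
  obtain ⟨w, hw⟩ := hr.exists_walk_length_eq_dist
  rw [← hw]
  exact Gp_lower_aux rfl hne w

lemma Gp_le_grid (hG' : G' = grid2 n m ⊔ SimpleGraph.fromEdgeSet {s(E, F)})
    (a b : Fin n × Fin m) : G'.dist a b ≤ l1 a b := by
  rw [← grid2_dist]
  exact SimpleGraph.Reachable.dist_anti (hG' ▸ le_sup_left) (grid2_reachable a b)

lemma Gp_adj_EF (hG' : G' = grid2 n m ⊔ SimpleGraph.fromEdgeSet {s(E, F)})
    (hne : E ≠ F) : G'.Adj E F := by
  rw [Gp_adj_iff hG' hne]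
  exact Or.inr (Or.inl ⟨rfl, rfl⟩)

lemma Gp_connected (hG' : G' = grid2 n m ⊔ SimpleGraph.fromEdgeSet {s(E, F)})
    (hn : 0 < n) (hm : 0 < m) : G'.Connected :=
  (grid2_connected hn hm).mono (hG' ▸ le_sup_left)

lemma Gp_le_route1 (hG' : G' = grid2 n m ⊔ SimpleGraph.fromEdgeSet {s(E, F)})
    (hne : E ≠ F) (hn : 0 < n) (hm : 0 < m) (a b : Fin n × Fin m) :
    G'.dist a b ≤ l1 a E + 1 + l1 F b := by
  have hc := Gp_connected hG' hn hm
  have t1 := hc.dist_triangle (u := a) (v := E) (w := b)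
  have t2 := hc.dist_triangle (u := E) (v := F) (w := b)
  have h1 := Gp_le_grid hG' a E
  have h2 := Gp_le_grid hG' F b
  have h3 : G'.dist E F ≤ 1 := by
    have := SimpleGraph.dist_le (SimpleGraph.Walk.cons (Gp_adj_EF hG' hne) SimpleGraph.Walk.nil)
    simpa using this
  omega

lemma Gp_le_route2 (hG' : G' = grid2 n m ⊔ SimpleGraph.fromEdgeSet {s(E, F)})
    (hne : E ≠ F) (hn : 0 < n) (hm : 0 < m) (a b : Fin n × Fin m) :
    G'.dist a b ≤ l1 a F + 1 + l1 E b := by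
  have hc := Gp_connected hG' hn hm
  have t1 := hc.dist_triangle (u := a) (v := F) (w := b)
  have t2 := hc.dist_triangle (u := F) (v := E) (w := b)
  have h1 := Gp_le_grid hG' a F
  have h2 := Gp_le_grid hG' E b
  have h3 : G'.dist F E ≤ 1 := by
    have := SimpleGraph.dist_le (SimpleGraph.Walk.cons (Gp_adj_EF hG' hne).symm SimpleGraph.Walk.nil)
    simpa using this
  omega

end

/-- Claim 7: on the `m × n` grid with extra edge `e = (E,F)` satisfying the
symmetry-breaking assumption (`x_F ≤ x_E`, `y_E ≤ y_F`, `x_E − x_F ≤ y_F − y_E`) and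
`d_G(E,F) ≥ 2`: if `A ∈ R_Q` and `B ∈ R_S` then `A` and `B` are distinguished by the
opposite corners `Q` or `S`; similarly if `A ∈ R_P` and `B ∈ R_R` then they are
distinguished by `P` or `R`. -/
theorem stmt_13 {m n : ℕ} (hn : 0 < n) (hm : 0 < m)
    (E F : Fin n × Fin m)
    (hdist : 2 ≤ (grid2 n m).dist E F)
    (h1 : ((F.1 : ℕ) : ℤ) ≤ ((E.1 : ℕ) : ℤ))
    (h2 : ((E.2 : ℕ) : ℤ) ≤ ((F.2 : ℕ) : ℤ))
    (h3 : ((E.1 : ℕ) : ℤ) - ((F.1 : ℕ) : ℤ) ≤ ((F.2 : ℕ) : ℤ) - ((E.2 : ℕ) : ℤ))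
    (G' : SimpleGraph (Fin n × Fin m))
    (hG' : G' = grid2 n m ⊔ SimpleGraph.fromEdgeSet {s(E, F)}) :
    let P : Fin n × Fin m := (⟨0, hn⟩, ⟨0, hm⟩)
    let Q : Fin n × Fin m := (⟨n - 1, Nat.sub_lt hn one_pos⟩, ⟨0, hm⟩)
    let R : Fin n × Fin m := (⟨n - 1, Nat.sub_lt hn one_pos⟩, ⟨m - 1, Nat.sub_lt hm one_pos⟩)
    let S : Fin n × Fin m := (⟨0, hn⟩, ⟨m - 1, Nat.sub_lt hm one_pos⟩)
    (∀ A B : Fin n × Fin m,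
      A ∈ specialRegion (grid2 n m) G' Q → B ∈ specialRegion (grid2 n m) G' S →
      (G'.dist A Q ≠ G'.dist B Q ∨ G'.dist A S ≠ G'.dist B S)) ∧
    (∀ A B : Fin n × Fin m,
      A ∈ specialRegion (grid2 n m) G' P → B ∈ specialRegion (grid2 n m) G' R →
      (G'.dist A P ≠ G'.dist B P ∨ G'.dist A R ≠ G'.dist B R)) := by
  have hne : E ≠ F := by
    rintro rfl
    simp [SimpleGraph.dist_self] at hdist
  have h1' : (F.1 : ℕ) ≤ (E.1 : ℕ) := by exact_mod_cast h1
  have h2' : (E.2 : ℕ) ≤ (F.2 : ℕ) := by exact_mod_cast h2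
  have h3' : (E.1 : ℕ) - (F.1 : ℕ) ≤ (F.2 : ℕ) - (E.2 : ℕ) := by omega
  rw [grid2_dist] at hdist
  unfold l1 at hdist
  intro P Q R S
  constructor
  · -- corners Q and S
    intro A B hA hB
    by_contra hcon
    push_neg at hcon
    obtain ⟨hc1, hc2⟩ := hcon
    simp only [specialRegion, Set.mem_setOf_eq, grid2_dist] at hA hB
    have hlA1 := Gp_lower hG' hne A Q
    have hu1A1 := Gp_le_grid hG' A Q
    have hu2A1 := Gp_le_route1 hG' hne hn hm A Q
    have hu3A1 := Gp_le_route2 hG' hne hn hm A Q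
    have hlA2 := Gp_lower hG' hne A S
    have hu1A2 := Gp_le_grid hG' A S
    have hu2A2 := Gp_le_route1 hG' hne hn hm A S
    have hu3A2 := Gp_le_route2 hG' hne hn hm A S
    have hlB1 := Gp_lower hG' hne B Q
    have hu1B1 := Gp_le_grid hG' B Q
    have hu2B1 := Gp_le_route1 hG' hne hn hm B Q
    have hu3B1 := Gp_le_route2 hG' hne hn hm B Q
    have hlB2 := Gp_lower hG' hne B S
    have hu1B2 := Gp_le_grid hG' B S
    have hu2B2 := Gp_le_route1 hG' hne hn hm B S
    have hu3B2 := Gp_le_route2 hG' hne hn hm B S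
    have hC11 : ((Q.1 : ℕ)) = n - 1 := rfl
    have hC12 : ((Q.2 : ℕ)) = 0 := rfl
    have hC21 : ((S.1 : ℕ)) = 0 := rfl
    have hC22 : ((S.2 : ℕ)) = m - 1 := rfl
    unfold l1 at hlA1 hu1A1 hu2A1 hu3A1 hlA2 hu1A2 hu2A2 hu3A2 hlB1 hu1B1 hu2B1 hu3B1 hlB2 hu1B2 hu2B2 hu3B2 hA hB
    simp only [hC11, hC12, hC21, hC22] at hlA1 hu1A1 hu2A1 hu3A1 hlA2 hu1A2 hu2A2 hu3A2 hlB1 hu1B1 hu2B1 hu3B1 hlB2 hu1B2 hu2B2 hu3B2 hA hB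
    simp only [natAbs_c0, natAbs_cn _ _ A.1.isLt, natAbs_cn _ _ A.2.isLt,
      natAbs_cn _ _ B.1.isLt, natAbs_cn _ _ B.2.isLt, natAbs_cn _ _ E.1.isLt,
      natAbs_cn _ _ E.2.isLt, natAbs_cn _ _ F.1.isLt, natAbs_cn _ _ F.2.isLt] at hlA1 hu1A1 hu2A1 hu3A1 hlA2 hu1A2 hu2A2 hu3A2 hlB1 hu1B1 hu2B1 hu3B1 hlB2 hu1B2 hu2B2 hu3B2 hA hB
    exact key_QS n m (A.1 : ℕ) (A.2 : ℕ) (B.1 : ℕ) (B.2 : ℕ) (E.1 : ℕ) (E.2 : ℕ)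
      (F.1 : ℕ) (F.2 : ℕ) (G'.dist A Q) (G'.dist A S) (G'.dist B Q) (G'.dist B S)
      hlA1 hu1A1 hu2A1 hu3A1 hlA2 hu1A2 hu2A2 hu3A2 hlB1 hu1B1 hu2B1 hu3B1
      hlB2 hu1B2 hu2B2 hu3B2 hA hB hc1 hc2 hdist h1' h2' h3'
      A.1.isLt A.2.isLt B.1.isLt B.2.isLt E.1.isLt E.2.isLt F.1.isLt F.2.isLt
  · -- corners P and R
    intro A B hA hB
    by_contra hcon
    push_neg at hcon
    obtain ⟨hc1, hc2⟩ := hcon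
    simp only [specialRegion, Set.mem_setOf_eq, grid2_dist] at hA hB
    have hlA1 := Gp_lower hG' hne A P
    have hu1A1 := Gp_le_grid hG' A P
    have hu2A1 := Gp_le_route1 hG' hne hn hm A P
    have hu3A1 := Gp_le_route2 hG' hne hn hm A P
    have hlA2 := Gp_lower hG' hne A R
    have hu1A2 := Gp_le_grid hG' A R
    have hu2A2 := Gp_le_route1 hG' hne hn hm A R
    have hu3A2 := Gp_le_route2 hG' hne hn hm A R
    have hlB1 := Gp_lower hG' hne B P
    have hu1B1 := Gp_le_grid hG' B P
    have hu2B1 := Gp_le_route1 hG' hne hn hm B P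
    have hu3B1 := Gp_le_route2 hG' hne hn hm B P
    have hlB2 := Gp_lower hG' hne B R
    have hu1B2 := Gp_le_grid hG' B R
    have hu2B2 := Gp_le_route1 hG' hne hn hm B R
    have hu3B2 := Gp_le_route2 hG' hne hn hm B R
    have hC11 : ((P.1 : ℕ)) = 0 := rfl
    have hC12 : ((P.2 : ℕ)) = 0 := rfl
    have hC21 : ((R.1 : ℕ)) = n - 1 := rfl
    have hC22 : ((R.2 : ℕ)) = m - 1 := rfl
    unfold l1 at hlA1 hu1A1 hu2A1 hu3A1 hlA2 hu1A2 hu2A2 hu3A2 hlB1 hu1B1 hu2B1 hu3B1 hlB2 hu1B2 hu2B2 hu3B2 hA hB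
    simp only [hC11, hC12, hC21, hC22] at hlA1 hu1A1 hu2A1 hu3A1 hlA2 hu1A2 hu2A2 hu3A2 hlB1 hu1B1 hu2B1 hu3B1 hlB2 hu1B2 hu2B2 hu3B2 hA hB
    simp only [natAbs_c0, natAbs_cn _ _ A.1.isLt, natAbs_cn _ _ A.2.isLt,
      natAbs_cn _ _ B.1.isLt, natAbs_cn _ _ B.2.isLt, natAbs_cn _ _ E.1.isLt,
      natAbs_cn _ _ E.2.isLt, natAbs_cn _ _ F.1.isLt, natAbs_cn _ _ F.2.isLt] at hlA1 hu1A1 hu2A1 hu3A1 hlA2 hu1A2 hu2A2 hu3A2 hlB1 hu1B1 hu2B1 hu3B1 hlB2 hu1B2 hu2B2 hu3B2 hA hB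
    exact key_PR n m (A.1 : ℕ) (A.2 : ℕ) (B.1 : ℕ) (B.2 : ℕ) (E.1 : ℕ) (E.2 : ℕ)
      (F.1 : ℕ) (F.2 : ℕ) (G'.dist A P) (G'.dist A R) (G'.dist B P) (G'.dist B R)
      hlA1 hu1A1 hu2A1 hu3A1 hlA2 hu1A2 hu2A2 hu3A2 hlB1 hu1B1 hu2B1 hu3B1
      hlB2 hu1B2 hu2B2 hu3B2 hA hB hc1 hc2 hdist h1' h2' h3'
      A.1.isLt A.2.isLt B.1.isLt B.2.isLt E.1.isLt E.2.isLt F.1.isLt F.2.isLt
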